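/- (Fundamental theorem about Von Mises–Church randomness, betting form.) A sequence x : ℕ → Bool is Von Mises–Church random if and only if for every partial recursive strategy f : List Bool →. Bool that bets infinitely often along x, Bob's long-run average gain per bet vanishes, i.e. P(n)/B(n) → 0 as n → ∞ (equivalently, Alice's average gain per bet, the negative of Bob's, also tends to 0): no effectively computable betting strategy wins against x and x does not win against any such strategy. -/

import Mathlib

open Filter

open scoped Classical

/-- The prefix of length `n` of a sequence `x : ℕ → Bool`, as a binary string. -/
def prefixOf (x : ℕ → Bool) (n : ℕ) : List Bool :=
  (List.range n).map x

/-- Number of `true`'s among the first `n` digits of `x`. -/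
def trueCount (x : ℕ → Bool) (n : ℕ) : ℕ :=
  ((Finset.range n).filter (fun i => x i = true)).card

/-- The index `n ≥ 1` is selected by the selection rule `f` along `x`:
`f(x₁, …, x_{n−1})` is defined and equals `true`.  (Position `n` carries the bit
`x (n-1)` since `x` is indexed from `0`.) -/
def SelectedAt (f : List Bool →. Bool) (x : ℕ → Bool) (n : ℕ) : Prop :=
  1 ≤ n ∧ f (prefixOf x (n - 1)) = Part.some true

/-- The subsequence of `x` along the selected indices, in increasing order. -/
noncomputable def selectedSeq (f : List Bool →. Bool) (x : ℕ → Bool) (k : ℕ) : Bool :=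
  x (Nat.nth (SelectedAt f x) k - 1)

/-- A sequence `x` is Von Mises–Church random if the frequency of `true`'s in its prefixes
tends to `1/2`, and for every partial recursive selection rule `f` selecting infinitely
many indices along `x`, the frequency of `true`'s along the selected subsequence also
tends to `1/2`. -/
def VMCRandom (x : ℕ → Bool) : Prop :=
  Tendsto (fun n : ℕ => (trueCount x n : ℝ) / n) atTop (nhds (1 / 2)) ∧
  ∀ f : List Bool →. Bool, Partrec f → {n : ℕ | SelectedAt f x n}.Infinite →
    Tendsto
      (fun m : ℕ =>
        ((((Finset.range m).filter (fun k => selectedSeq f x k = true)).card : ℝ) / m))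
      atTop (nhds (1 / 2))

/-- Bob's payoff at round `n ≥ 1` when betting with strategy `f` against `x`:
`0` if `f(x₁, …, x_{n−1})` is undefined (no bet), `+1` if the bet equals `xₙ`,
`−1` otherwise. -/
noncomputable def payoff (f : List Bool →. Bool) (x : ℕ → Bool) (n : ℕ) : ℤ :=
  if h : (f (prefixOf x (n - 1))).Dom then
    (if (f (prefixOf x (n - 1))).get h = x (n - 1) then 1 else -1)
  else 0

/-- `B(n)`: the number of rounds `≤ n` at which Bob bets. -/
noncomputable def betCount (f : List Bool →. Bool) (x : ℕ → Bool) (n : ℕ) : ℕ :=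
  ((Finset.Icc 1 n).filter (fun k => (f (prefixOf x (k - 1))).Dom)).card

/-- `P(n)`: the sum of Bob's payoffs over the rounds `≤ n`. -/
noncomputable def payoffSum (f : List Bool →. Bool) (x : ℕ → Bool) (n : ℕ) : ℤ :=
  ∑ k ∈ Finset.Icc 1 n, payoff f x k

/-- `f` bets infinitely often along `x`: `B(n) → ∞`. -/
noncomputable def BetsInfinitelyOften (f : List Bool →. Bool) (x : ℕ → Bool) : Prop :=
  Tendsto (fun n : ℕ => betCount f x n) atTop atTop


-- ## Auxiliary lemmas


private lemma sum_boole_int (s : Finset ℕ) (r : ℕ → Prop) [DecidablePred r] :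
    ∑ k ∈ s, (if r k then (1:ℤ) else 0) = (s.filter r).card := by
  simp [Finset.sum_boole]

private lemma Icc_succ (n : ℕ) : Finset.Icc 1 (n+1) = insert (n+1) (Finset.Icc 1 n) := by
  ext k; simp [Nat.lt_succ_iff]; omega

private lemma card_filter_Icc_eq_count (p : ℕ → Prop) [DecidablePred p] (hp0 : ¬ p 0) (n : ℕ) :
    ((Finset.Icc 1 n).filter p).card = Nat.count p (n + 1) := by
  rw [Nat.count_eq_card_filter_range]
  congr 1
  ext k
  simp only [Finset.mem_filter, Finset.mem_Icc, Finset.mem_range, Nat.lt_succ_iff]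
  constructor
  · rintro ⟨⟨-, h2⟩, h3⟩; exact ⟨h2, h3⟩
  · rintro ⟨h1, h2⟩
    exact ⟨⟨Nat.one_le_iff_ne_zero.mpr (fun h => hp0 (h ▸ h2)), h1⟩, h2⟩

private lemma card_filter_eq_nth (p q : ℕ → Prop) [DecidablePred p] [DecidablePred q] (hp0 : ¬ p 0) :
    ∀ n, ((Finset.Icc 1 n).filter (fun k => p k ∧ q k)).card
      = ((Finset.range (((Finset.Icc 1 n).filter p).card)).filter
          (fun k => q (Nat.nth p k))).card := by
  intro n
  induction n with
  | zero => simp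
  | succ n ih =>
    by_cases hpn : p (n + 1)
    · have hB : ((Finset.Icc 1 (n+1)).filter p).card
          = ((Finset.Icc 1 n).filter p).card + 1 := by
        rw [Icc_succ, Finset.filter_insert, if_pos hpn,
          Finset.card_insert_of_notMem (by simp)]
      have hnth : Nat.nth p (((Finset.Icc 1 n).filter p).card) = n + 1 := by
        rw [card_filter_Icc_eq_count p hp0]; exact Nat.nth_count hpn
      rw [hB, Icc_succ, Finset.filter_insert, Finset.range_add_one, Finset.filter_insert, hnth]
      by_cases hq : q (n+1)
      · rw [if_pos ⟨hpn, hq⟩, if_pos hq,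
          Finset.card_insert_of_notMem (by simp),
          Finset.card_insert_of_notMem (by simp), ih]
      · rw [if_neg (by tauto), if_neg hq, ih]
    · have hB : ((Finset.Icc 1 (n+1)).filter p).card
          = ((Finset.Icc 1 n).filter p).card := by
        rw [Icc_succ, Finset.filter_insert, if_neg hpn]
      rw [hB, Icc_succ, Finset.filter_insert, if_neg (by tauto), ih]

private lemma tendsto_card_filter_atTop (p : ℕ → Prop) [DecidablePred p] (hp0 : ¬ p 0)
    (hp : (setOf p).Infinite) :
    Tendsto (fun n => (((Finset.Icc 1 n).filter p).card : ℕ)) atTop atTop := by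
  apply tendsto_atTop_atTop_of_monotone
  · intro a b hab
    exact Finset.card_le_card (Finset.filter_subset_filter _ (Finset.Icc_subset_Icc_right hab))
  · intro b
    refine ⟨Nat.nth p b, ?_⟩
    rw [card_filter_Icc_eq_count p hp0, Nat.count_succ,
      Nat.count_nth_of_infinite hp, if_pos (Nat.nth_mem_of_infinite hp b)]
    omega

private lemma card_filter_nth_eq (p : ℕ → Prop) [DecidablePred p] (hp0 : ¬ p 0) (hp : (setOf p).Infinite)
    (m : ℕ) : ((Finset.Icc 1 (Nat.nth p m)).filter p).card = m + 1 := by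
  rw [card_filter_Icc_eq_count p hp0, Nat.count_succ,
    Nat.count_nth_of_infinite hp, if_pos (Nat.nth_mem_of_infinite hp m)]

private lemma bridge1 (p q : ℕ → Prop) [DecidablePred p] [DecidablePred q] (hp0 : ¬ p 0) {L : ℝ}
    (hB : Tendsto (fun n => (((Finset.Icc 1 n).filter p).card : ℕ)) atTop atTop)
    (h : Tendsto (fun m : ℕ =>
        ((((Finset.range m).filter (fun k => q (Nat.nth p k))).card : ℝ) / m))
      atTop (nhds L)) :
    Tendsto (fun n : ℕ =>
        ((((Finset.Icc 1 n).filter (fun k => p k ∧ q k)).card : ℝ)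
          / (((Finset.Icc 1 n).filter p).card : ℝ))) atTop (nhds L) := by
  have := h.comp hB
  refine this.congr fun n => ?_
  simp only [Function.comp]
  rw [card_filter_eq_nth p q hp0 n]

private lemma bridge2 (p q : ℕ → Prop) [DecidablePred p] [DecidablePred q] (hp0 : ¬ p 0) (hp : (setOf p).Infinite) {L : ℝ}
    (h : Tendsto (fun n : ℕ =>
        ((((Finset.Icc 1 n).filter (fun k => p k ∧ q k)).card : ℝ)
          / (((Finset.Icc 1 n).filter p).card : ℝ))) atTop (nhds L)) :
    Tendsto (fun m : ℕ =>
        ((((Finset.range m).filter (fun k => q (Nat.nth p k))).card : ℝ) / m))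
      atTop (nhds L) := by
  rw [← tendsto_add_atTop_iff_nat 1]
  have hnth : Tendsto (Nat.nth p) atTop atTop :=
    tendsto_atTop_mono (fun n => (Nat.nth_strictMono hp).le_apply) tendsto_id
  have h2 := h.comp hnth
  refine h2.congr fun m => ?_
  simp only [Function.comp]
  rw [card_filter_eq_nth p q hp0, card_filter_nth_eq p hp0 hp m]

private lemma tendsto_half (f g : ℕ → ℝ) (hg : Tendsto g atTop atTop)
    (h : Tendsto (fun n => (2 * f n - g n) / g n) atTop (nhds 0)) :
    Tendsto (fun n => f n / g n) atTop (nhds (1/2)) := by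
  have h2 : Tendsto (fun n => (2 * f n - g n) / g n / 2 + 1/2) atTop (nhds (0/2 + 1/2)) :=
    (h.div_const 2).add tendsto_const_nhds
  have e : (0:ℝ)/2 + 1/2 = 1/2 := by norm_num
  rw [e] at h2
  refine Tendsto.congr' ?_ h2
  filter_upwards [hg.eventually_ge_atTop 1] with n hn
  have hg0 : g n ≠ 0 := by positivity
  field_simp
  ring

private lemma tendsto_abs_zero (f g : ℕ → ℝ) (hg : Tendsto g atTop atTop)
    (h : Tendsto (fun n => f n / g n) atTop (nhds (1/2))) :
    Tendsto (fun n => |2 * f n - g n| / g n) atTop (nhds 0) := by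
  have h2 : Tendsto (fun n => |2 * (f n / g n) - 1|) atTop (nhds |2 * (1/2) - 1|) :=
    ((h.const_mul 2).sub_const 1).abs
  have e : |2 * ((1:ℝ)/2) - 1| = 0 := by norm_num
  rw [e] at h2
  refine Tendsto.congr' ?_ h2
  filter_upwards [hg.eventually_ge_atTop 1] with n hn
  have hg0 : (0:ℝ) < g n := by linarith
  have e2 : (2*(f n / g n) - 1) * g n = 2 * f n - g n := by field_simp
  exact Eq.symm <| calc |2 * f n - g n| / g n = |(2*(f n/g n) - 1) * g n| / g n := by rw [e2]
    _ = |2*(f n/g n) - 1| * |g n| / g n := by rw [abs_mul]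
    _ = |2*(f n/g n) - 1| := by
        rw [abs_of_pos hg0, mul_div_assoc, div_self hg0.ne', mul_one]

private lemma termAux (p q : ℕ → Prop) [DecidablePred p] [DecidablePred q] (hp0 : ¬ p 0) (Bbig : ℕ → ℕ)
    (hsub : ∀ n, ((Finset.Icc 1 n).filter p).card ≤ Bbig n)
    (hBbig : Tendsto (fun n => (Bbig n : ℝ)) atTop atTop)
    (hhalf : (setOf p).Infinite → Tendsto (fun n : ℕ =>
        ((((Finset.Icc 1 n).filter (fun k => p k ∧ q k)).card : ℝ)
          / (((Finset.Icc 1 n).filter p).card : ℝ))) atTop (nhds (1/2))) :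
    Tendsto (fun n : ℕ =>
        |2 * (((Finset.Icc 1 n).filter (fun k => p k ∧ q k)).card : ℝ)
          - (((Finset.Icc 1 n).filter p).card : ℝ)| / (Bbig n : ℝ))
      atTop (nhds 0) := by
  set T : ℕ → ℕ := fun n => ((Finset.Icc 1 n).filter (fun k => p k ∧ q k)).card with hT
  set B : ℕ → ℕ := fun n => ((Finset.Icc 1 n).filter p).card with hB
  have hTB : ∀ n, T n ≤ B n := by
    intro n
    apply Finset.card_le_card
    intro k hk
    simp only [Finset.mem_filter] at *
    tauto
  by_cases hinf : (setOf p).Infinite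
  · have hBn : Tendsto B atTop atTop := tendsto_card_filter_atTop p hp0 hinf
    have hBr : Tendsto (fun n => (B n : ℝ)) atTop atTop :=
      tendsto_natCast_atTop_atTop.comp hBn
    have habs := tendsto_abs_zero (fun n => (T n : ℝ)) (fun n => (B n : ℝ)) hBr (hhalf hinf)
    apply squeeze_zero' (Eventually.of_forall fun n => by positivity)
      (g := fun n => |2 * (T n : ℝ) - (B n : ℝ)| / (B n : ℝ)) ?_ habs
    filter_upwards [hBn.eventually_ge_atTop 1] with n hn
    have h1 : (0:ℝ) < B n := by exact_mod_cast hn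
    have h2 : (B n : ℝ) ≤ Bbig n := by exact_mod_cast hsub n
    gcongr

  · have hfin : (setOf p).Finite := Set.not_infinite.mp hinf
    set C : ℕ := hfin.toFinset.card with hC
    have hBC : ∀ n, B n ≤ C := by
      intro n
      apply Finset.card_le_card
      intro k hk
      simp only [Finset.mem_filter, Set.Finite.mem_toFinset, Set.mem_setOf_eq] at *
      tauto
    apply squeeze_zero' (Eventually.of_forall fun n => by positivity)
      (g := fun n => (C : ℝ) / (Bbig n : ℝ)) ?_ (tendsto_const_nhds.div_atTop hBbig)
    filter_upwards [hBbig.eventually_ge_atTop 1] with n hn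
    have hnum : |2 * (T n : ℝ) - (B n : ℝ)| ≤ C := by
      have h1 : (0:ℝ) ≤ T n := by positivity
      have h2 : (T n : ℝ) ≤ B n := by exact_mod_cast hTB n
      have h3 : (B n : ℝ) ≤ C := by exact_mod_cast hBC n
      rw [abs_le]
      constructor <;> linarith
    have hpos : (0:ℝ) < Bbig n := by linarith
    exact div_le_div_of_nonneg_right hnum hpos.le


private lemma part_map_not (o : Part Bool) :
    o.map (fun b => !b) = Part.some true ↔ o = Part.some false := by
  simp only [Part.eq_some_iff, Part.mem_map_iff]
  constructor
  · rintro ⟨a, ha, hb⟩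
    cases a
    · exact ha
    · simp at hb
  · intro h
    exact ⟨false, h, rfl⟩

private lemma payoff_eq (f : List Bool →. Bool) (x : ℕ → Bool) (k : ℕ) (hk : 1 ≤ k) :
    payoff f x k =
      2 * (if SelectedAt f x k ∧ x (k-1) = true then (1:ℤ) else 0)
        - (if SelectedAt f x k then 1 else 0)
        + ((if 1 ≤ k ∧ f (prefixOf x (k-1)) = Part.some false then (1:ℤ) else 0)
        - 2 * (if (1 ≤ k ∧ f (prefixOf x (k-1)) = Part.some false) ∧ x (k-1) = true then (1:ℤ) else 0)) := by
  unfold payoff SelectedAt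
  by_cases h : (f (prefixOf x (k-1))).Dom
  · obtain ⟨b, hb⟩ : ∃ b, f (prefixOf x (k-1)) = Part.some b := ⟨_, (Part.some_get h).symm⟩
    cases b <;> cases hx : x (k-1) <;>
      simp [hb, hx, hk, Part.some_inj]
  · have h1 : ¬ (f (prefixOf x (k-1)) = Part.some true) := fun he => h (by rw [he]; trivial)
    have h2 : ¬ (f (prefixOf x (k-1)) = Part.some false) := fun he => h (by rw [he]; trivial)
    simp [h, h1, h2]

private lemma payoffSum_eq (f : List Bool →. Bool) (x : ℕ → Bool) (n : ℕ) :
    payoffSum f x n =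
      2 * (((Finset.Icc 1 n).filter (fun k => SelectedAt f x k ∧ x (k-1) = true)).card : ℤ)
        - (((Finset.Icc 1 n).filter (fun k => SelectedAt f x k)).card : ℤ)
        + ((((Finset.Icc 1 n).filter (fun k => 1 ≤ k ∧ f (prefixOf x (k-1)) = Part.some false)).card : ℤ)
        - 2 * (((Finset.Icc 1 n).filter (fun k => (1 ≤ k ∧ f (prefixOf x (k-1)) = Part.some false) ∧ x (k-1) = true)).card : ℤ)) := by
  unfold payoffSum
  rw [Finset.sum_congr rfl (fun k hk => payoff_eq f x k (Finset.mem_Icc.mp hk).1)]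
  rw [Finset.sum_add_distrib, Finset.sum_sub_distrib, Finset.sum_sub_distrib,
    ← Finset.mul_sum, ← Finset.mul_sum]
  simp only [Finset.sum_boole, Finset.filter_congr_decidable]

private lemma betCount_split (f : List Bool →. Bool) (x : ℕ → Bool) (n : ℕ) :
    betCount f x n =
      ((Finset.Icc 1 n).filter (fun k => SelectedAt f x k)).card
        + ((Finset.Icc 1 n).filter (fun k => 1 ≤ k ∧ f (prefixOf x (k-1)) = Part.some false)).card := by
  unfold betCount
  rw [Finset.card_filter, Finset.card_filter, Finset.card_filter, ← Finset.sum_add_distrib]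
  refine Finset.sum_congr rfl fun k hk => ?_
  have hk1 : 1 ≤ k := (Finset.mem_Icc.mp hk).1
  by_cases h : (f (prefixOf x (k-1))).Dom
  · obtain ⟨b, hb⟩ : ∃ b, f (prefixOf x (k-1)) = Part.some b := ⟨_, (Part.some_get h).symm⟩
    cases b <;> simp [SelectedAt, hb, hk1, Part.some_inj]
  · have h1 : ¬ (f (prefixOf x (k-1)) = Part.some true) := fun he => h (by rw [he]; trivial)
    have h2 : ¬ (f (prefixOf x (k-1)) = Part.some false) := fun he => h (by rw [he]; trivial)
    simp [SelectedAt, h, h1, h2]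

private lemma card_shift (r : ℕ → Prop) [DecidablePred r] (n : ℕ) :
    ((Finset.Icc 1 n).filter (fun k => 1 ≤ k ∧ r (k-1))).card
      = ((Finset.range n).filter r).card := by
  refine Finset.card_bij' (fun k _ => k - 1) (fun i _ => i + 1) ?_ ?_ ?_ ?_
  · intro k hk
    simp only [Finset.mem_filter, Finset.mem_Icc, Finset.mem_range] at hk ⊢
    exact ⟨by omega, hk.2.2⟩
  · intro i hi
    simp only [Finset.mem_filter, Finset.mem_Icc, Finset.mem_range] at hi ⊢
    refine ⟨⟨by omega, by omega⟩, by omega, by simpa using hi.2⟩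
  · intro k hk
    simp only [Finset.mem_filter, Finset.mem_Icc] at hk
    omega
  · intro i _
    omega

/-- **Fundamental theorem about Von Mises–Church randomness (betting form):**
`x` is Von Mises–Church random if and only if for every partial recursive betting
strategy `f` betting infinitely often along `x`, Bob's long-run average gain per bet
vanishes: `P(n)/B(n) → 0` (hence Alice's average gain, its negative, also tends to `0`).
No effectively computable betting strategy wins against `x`, nor does `x` win against
any such strategy. -/
theorem vmc_random_iff_no_winning_strategy (x : ℕ → Bool) :
    VMCRandom x ↔
      ∀ f : List Bool →. Bool, Partrec f → BetsInfinitelyOften f x →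
        Tendsto (fun n : ℕ => (payoffSum f x n : ℝ) / (betCount f x n : ℝ))
          atTop (nhds 0) := by
  constructor
  · rintro ⟨h0, hsel⟩ f hf hBinf
    have hBbig : Tendsto (fun n => (betCount f x n : ℝ)) atTop atTop :=
      tendsto_natCast_atTop_atTop.comp hBinf
    set g₂ : List Bool →. Bool := fun l => Part.map (fun b => !b) (f l) with hg₂def
    have hg₂ : Partrec g₂ :=
      hf.map (Computable.to₂ (Primrec.not.comp Primrec.snd).to_comp)
    have hp₁0 : ¬ SelectedAt f x 0 := fun h => by simp [SelectedAt] at h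
    have hp₂0 : ¬ SelectedAt g₂ x 0 := fun h => by simp [SelectedAt] at h
    have hpe : ∀ n, (Finset.Icc 1 n).filter (fun k => 1 ≤ k ∧ f (prefixOf x (k-1)) = Part.some false)
        = (Finset.Icc 1 n).filter (fun k => SelectedAt g₂ x k) := fun n =>
      Finset.filter_congr fun k _ =>
        Iff.symm (and_congr_right fun _ => part_map_not (f (prefixOf x (k-1))))
    have hpe2 : ∀ n, (Finset.Icc 1 n).filter
          (fun k => (1 ≤ k ∧ f (prefixOf x (k-1)) = Part.some false) ∧ x (k-1) = true)
        = (Finset.Icc 1 n).filter (fun k => SelectedAt g₂ x k ∧ x (k-1) = true) := fun n =>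
      Finset.filter_congr fun k _ =>
        and_congr_left fun _ =>
          Iff.symm (and_congr_right fun _ => part_map_not (f (prefixOf x (k-1))))
    have hsplit : ∀ n, betCount f x n =
        ((Finset.Icc 1 n).filter (fun k => SelectedAt f x k)).card
          + ((Finset.Icc 1 n).filter (fun k => SelectedAt g₂ x k)).card := by
      intro n; rw [betCount_split, hpe n]
    have hsub₁ : ∀ n,
        ((Finset.Icc 1 n).filter (fun k => SelectedAt f x k)).card ≤ betCount f x n := by
      intro n; rw [hsplit]; exact Nat.le_add_right _ _
    have hsub₂ : ∀ n,
        ((Finset.Icc 1 n).filter (fun k => SelectedAt g₂ x k)).card ≤ betCount f x n := by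
      intro n; rw [hsplit]; exact Nat.le_add_left _ _
    have hhalf₁ : (setOf (fun k => SelectedAt f x k)).Infinite →
        Tendsto (fun n : ℕ =>
          ((((Finset.Icc 1 n).filter (fun k => SelectedAt f x k ∧ x (k-1) = true)).card : ℝ)
            / (((Finset.Icc 1 n).filter (fun k => SelectedAt f x k)).card : ℝ)))
          atTop (nhds (1/2)) := by
      intro hinf
      refine bridge1 _ (fun i => x (i-1) = true) hp₁0
        (tendsto_card_filter_atTop _ hp₁0 hinf) ?_
      refine (hsel f hf hinf).congr fun m => ?_
      simp only [selectedSeq, Finset.filter_congr_decidable]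
      convert rfl
      exact Finset.filter_congr fun _ _ => Iff.rfl
    have hhalf₂ : (setOf (fun k => SelectedAt g₂ x k)).Infinite →
        Tendsto (fun n : ℕ =>
          ((((Finset.Icc 1 n).filter (fun k => SelectedAt g₂ x k ∧ x (k-1) = true)).card : ℝ)
            / (((Finset.Icc 1 n).filter (fun k => SelectedAt g₂ x k)).card : ℝ)))
          atTop (nhds (1/2)) := by
      intro hinf
      refine bridge1 _ (fun i => x (i-1) = true) hp₂0
        (tendsto_card_filter_atTop _ hp₂0 hinf) ?_
      refine (hsel g₂ hg₂ hinf).congr fun m => ?_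
      simp only [selectedSeq, Finset.filter_congr_decidable]
      convert rfl
      exact Finset.filter_congr fun _ _ => Iff.rfl
    have term₁ := termAux (fun k => SelectedAt f x k) (fun i => x (i-1) = true) hp₁0
      (betCount f x) hsub₁ hBbig hhalf₁
    have term₂ := termAux (fun k => SelectedAt g₂ x k) (fun i => x (i-1) = true) hp₂0
      (betCount f x) hsub₂ hBbig hhalf₂
    have hsum0 := term₁.add term₂
    rw [add_zero] at hsum0
    apply squeeze_zero_norm' ?_ hsum0
    filter_upwards [hBinf.eventually_ge_atTop 1] with n hn
    have hb : (0:ℝ) < betCount f x n := by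
      have h1 : (1:ℕ) ≤ betCount f x n := hn
      have h2 : (0:ℕ) < betCount f x n := h1
      exact_mod_cast h2
    have hps : (payoffSum f x n : ℝ) =
        2 * (((Finset.Icc 1 n).filter (fun k => SelectedAt f x k ∧ x (k-1) = true)).card : ℝ)
          - (((Finset.Icc 1 n).filter (fun k => SelectedAt f x k)).card : ℝ)
          + ((((Finset.Icc 1 n).filter (fun k => SelectedAt g₂ x k)).card : ℝ)
          - 2 * (((Finset.Icc 1 n).filter (fun k => SelectedAt g₂ x k ∧ x (k-1) = true)).card : ℝ)) := by
      have h1 := payoffSum_eq f x n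
      rw [hpe n, hpe2 n] at h1
      have h2 := congrArg (fun z : ℤ => (z : ℝ)) h1
      push_cast at h2
      exact h2
    set T₁ : ℝ := (((Finset.Icc 1 n).filter (fun k => SelectedAt f x k ∧ x (k-1) = true)).card : ℝ)
    set B₁ : ℝ := (((Finset.Icc 1 n).filter (fun k => SelectedAt f x k)).card : ℝ)
    set T₂ : ℝ := (((Finset.Icc 1 n).filter (fun k => SelectedAt g₂ x k ∧ x (k-1) = true)).card : ℝ)
    set B₂ : ℝ := (((Finset.Icc 1 n).filter (fun k => SelectedAt g₂ x k)).card : ℝ)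
    rw [Real.norm_eq_abs, abs_div, abs_of_pos hb, hps]
    calc |2 * T₁ - B₁ + (B₂ - 2 * T₂)| / (betCount f x n : ℝ)
        ≤ (|2 * T₁ - B₁| + |2 * T₂ - B₂|) / (betCount f x n : ℝ) := by
          gcongr
          calc |2 * T₁ - B₁ + (B₂ - 2 * T₂)| ≤ |2 * T₁ - B₁| + |B₂ - 2 * T₂| := abs_add_le _ _
            _ = |2 * T₁ - B₁| + |2 * T₂ - B₂| := by rw [abs_sub_comm B₂]
      _ = |2 * T₁ - B₁| / (betCount f x n : ℝ) + |2 * T₂ - B₂| / (betCount f x n : ℝ) := by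
          rw [add_div]
  · intro H
    constructor
    · -- overall limiting frequency, via the always-bet-true strategy
      have hf0 : Partrec (fun _ : List Bool => Part.some true) :=
        (Computable.const true).partrec
      have hbc : ∀ n, betCount (fun _ : List Bool => Part.some true) x n = n := by
        intro n
        unfold betCount
        trans (Finset.Icc 1 n).card
        · apply congrArg Finset.card
          ext k
          simp [Finset.mem_filter]
        · rw [Nat.card_Icc]
          omega
      have hBinf : BetsInfinitelyOften (fun _ : List Bool => Part.some true) x := by
        unfold BetsInfinitelyOften
        simp only [hbc]
        exact tendsto_id
      have hP := H _ hf0 hBinf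
      have hsum : ∀ n, payoffSum (fun _ : List Bool => Part.some true) x n
          = 2 * (trueCount x n : ℤ) - n := by
        intro n
        refine (payoffSum_eq _ x n).trans ?_
        have e1 : (Finset.Icc 1 n).filter
              (fun k => SelectedAt (fun _ : List Bool => Part.some true) x k ∧ x (k-1) = true)
            = (Finset.Icc 1 n).filter (fun k => 1 ≤ k ∧ x (k-1) = true) :=
          Finset.filter_congr fun k _ => by simp [SelectedAt]
        have e2 : (Finset.Icc 1 n).filter
              (fun k => SelectedAt (fun _ : List Bool => Part.some true) x k)
            = Finset.Icc 1 n :=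
          Finset.filter_true_of_mem fun k hk => ⟨(Finset.mem_Icc.mp hk).1, rfl⟩
        have e3 : (Finset.Icc 1 n).filter
              (fun k => 1 ≤ k ∧ (fun _ : List Bool => Part.some true) (prefixOf x (k-1)) = Part.some false)
            = ∅ :=
          Finset.filter_false_of_mem fun k _ => by simp
        have e4 : (Finset.Icc 1 n).filter
              (fun k => (1 ≤ k ∧ (fun _ : List Bool => Part.some true) (prefixOf x (k-1)) = Part.some false) ∧ x (k-1) = true)
            = ∅ :=
          Finset.filter_false_of_mem fun k _ => by simp
        rw [e1, e2, e3, e4]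
        have e6 : ((Finset.Icc 1 n).filter (fun k : ℕ => 1 ≤ k ∧ x (k-1) = true)).card
            = trueCount x n := by
          rw [card_shift (fun i => x i = true) n]
          unfold trueCount
          simp only [Finset.filter_congr_decidable]
        rw [e6, Nat.card_Icc]
        simp
      refine tendsto_half (fun n => (trueCount x n : ℝ)) (fun n => (n : ℝ))
        tendsto_natCast_atTop_atTop ?_
      refine hP.congr fun n => ?_
      rw [hbc n]
      congr 1
      have := congrArg (fun z : ℤ => (z : ℝ)) (hsum n)
      push_cast at this
      exact this
    · intro g hg hinf
      set F : List Bool →. Bool :=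
        fun l => (g l).bind (fun b => bif b then Part.some true else Part.none) with hFdef
      have hFsome : ∀ (l : List Bool) (c : Bool),
          F l = Part.some c ↔ (g l = Part.some true ∧ c = true) := by
        intro l c
        rw [Part.eq_some_iff, Part.eq_some_iff]
        simp only [hFdef, Part.mem_bind_iff]
        constructor
        · rintro ⟨b, hb, hc⟩
          cases b
          · simp at hc
          · simp at hc
            exact ⟨hb, hc⟩
        · rintro ⟨hb, rfl⟩
          exact ⟨true, hb, by simp⟩
      have hPF : Partrec F :=
        hg.bind (Partrec.cond Computable.snd ((Computable.const true).partrec) Partrec.none)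
      have hpeF : ∀ n, (Finset.Icc 1 n).filter (fun k => SelectedAt F x k)
          = (Finset.Icc 1 n).filter (fun k => SelectedAt g x k) := fun n =>
        Finset.filter_congr fun k _ =>
          and_congr_right fun _ => ⟨fun h => ((hFsome _ _).mp h).1,
            fun h => (hFsome _ true).mpr ⟨h, rfl⟩⟩
      have hpeF2 : ∀ n, (Finset.Icc 1 n).filter (fun k => SelectedAt F x k ∧ x (k-1) = true)
          = (Finset.Icc 1 n).filter (fun k => SelectedAt g x k ∧ x (k-1) = true) := fun n =>
        Finset.filter_congr fun k _ =>
          and_congr_left fun _ =>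
            and_congr_right fun _ => ⟨fun h => ((hFsome _ _).mp h).1,
              fun h => (hFsome _ true).mpr ⟨h, rfl⟩⟩
      have hpF : ¬ (fun k => SelectedAt g x k) 0 := fun h => by simp [SelectedAt] at h
      have hFfalse : ∀ n, (Finset.Icc 1 n).filter
            (fun k => 1 ≤ k ∧ F (prefixOf x (k-1)) = Part.some false) = ∅ := fun n =>
        Finset.filter_false_of_mem fun k _ => by
          rintro ⟨-, hsome⟩
          exact absurd ((hFsome _ _).mp hsome).2 (by simp)
      have hFfalse2 : ∀ n, (Finset.Icc 1 n).filter
            (fun k => (1 ≤ k ∧ F (prefixOf x (k-1)) = Part.some false) ∧ x (k-1) = true)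
          = ∅ := fun n =>
        Finset.filter_false_of_mem fun k _ => by
          rintro ⟨⟨-, hsome⟩, -⟩
          exact absurd ((hFsome _ _).mp hsome).2 (by simp)
      have hbcF : ∀ n, betCount F x n
          = ((Finset.Icc 1 n).filter (fun k => SelectedAt g x k)).card := by
        intro n
        rw [betCount_split, hpeF n, hFfalse n]
        simp
      have hBinfF : BetsInfinitelyOften F x := by
        unfold BetsInfinitelyOften
        exact Tendsto.congr (fun n => (hbcF n).symm)
          (tendsto_card_filter_atTop (fun k => SelectedAt g x k) hpF hinf)
      have hP := H F hPF hBinfF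
      have hPsum : ∀ n, payoffSum F x n
          = 2 * (((Finset.Icc 1 n).filter (fun k => SelectedAt g x k ∧ x (k-1) = true)).card : ℤ)
            - (((Finset.Icc 1 n).filter (fun k => SelectedAt g x k)).card : ℤ) := by
        intro n
        rw [payoffSum_eq, hpeF n, hpeF2 n, hFfalse n, hFfalse2 n]
        simp
      have hTB : Tendsto (fun n : ℕ =>
          ((((Finset.Icc 1 n).filter (fun k => SelectedAt g x k ∧ x (k-1) = true)).card : ℝ)
            / (((Finset.Icc 1 n).filter (fun k => SelectedAt g x k)).card : ℝ)))
          atTop (nhds (1/2)) := by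
        refine tendsto_half _ _
          (tendsto_natCast_atTop_atTop.comp
            (tendsto_card_filter_atTop (fun k => SelectedAt g x k) hpF hinf)) ?_
        refine hP.congr fun n => ?_
        rw [hbcF n]
        congr 1
        have := congrArg (fun z : ℤ => (z : ℝ)) (hPsum n)
        push_cast at this
        exact this
      refine (bridge2 (fun k => SelectedAt g x k) (fun i => x (i-1) = true) hpF hinf hTB).congr
        fun m => ?_
      simp only [selectedSeq, Finset.filter_congr_decidable]
      convert rfl
      exact Finset.filter_congr fun _ _ => Iff.rfl
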